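/- For each fixed n, the coefficient of x^k in H_n(x;c) is a polynomial in c of degree at most ⌊(n−k)/2⌋, and the coefficient of x^{n−2j} in (−1)^j H_n(x;c), viewed as a polynomial in c, has nonnegative leading coefficient. -/
import Mathlib


open Finset Polynomial

attribute [local instance] Classical.propDecidable

/-- The associated Hermite polynomial regarded in `ℝ[c][x]`: the outer variable
is `x`, the inner polynomial variable is `c`. -/
noncomputable def aHC : ℕ → Polynomial (Polynomial ℝ)
  | 0 => 1
  | 1 => Polynomial.X
  | n + 2 =>
      Polynomial.X * aHC (n + 1) -
        Polynomial.C (Polynomial.C (n : ℝ) + Polynomial.X) * aHC n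

lemma aHC_rec (n : ℕ) : aHC (n+2) =
    X * aHC (n+1) - C (C (n:ℝ) + X) * aHC n := rfl

lemma aHC_coeff_zero (n : ℕ) :
    (aHC (n+2)).coeff 0 = -((C (n:ℝ) + X) * (aHC n).coeff 0) := by
  rw [aHC_rec, coeff_sub, coeff_C_mul, mul_coeff_zero, coeff_X_zero, zero_mul, zero_sub]

lemma aHC_coeff_succ (n k : ℕ) :
    (aHC (n+2)).coeff (k+1) =
      (aHC (n+1)).coeff k - (C (n:ℝ) + X) * (aHC n).coeff (k+1) := by
  rw [aHC_rec, coeff_sub, coeff_C_mul, coeff_X_mul]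

def Sinv (n : ℕ) : Prop :=
  (∀ k, ((aHC n).coeff k).natDegree ≤ (n - k) / 2) ∧
  (∀ k, n < k → (aHC n).coeff k = 0) ∧
  (∀ j, 2 * j ≤ n → ∀ i, 0 ≤ (-1:ℝ)^j * (((aHC n).coeff (n - 2*j)).coeff i))

lemma mul_shift_coeff_nonneg (n : ℕ) (p : Polynomial ℝ) (hp : ∀ i, 0 ≤ p.coeff i) :
    ∀ i, 0 ≤ ((C (n:ℝ) + X) * p).coeff i := by
  intro i
  rw [add_mul, coeff_add, coeff_C_mul]
  have h1 : (0:ℝ) ≤ (n:ℝ) * p.coeff i := mul_nonneg (by positivity) (hp i)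
  cases i with
  | zero => rw [mul_coeff_zero, coeff_X_zero, zero_mul]; simpa using h1
  | succ m => rw [coeff_X_mul]; exact add_nonneg h1 (hp m)

lemma Sinv_zero : Sinv 0 := by
  refine ⟨?_, ?_, ?_⟩
  · intro k; simp [aHC, coeff_one]
    split <;> simp
  · intro k hk; simp [aHC, coeff_one]; omega
  · intro j hj i
    have : j = 0 := by omega
    subst this
    simp [aHC, coeff_one]
    split <;> simp

lemma Sinv_one : Sinv 1 := by
  refine ⟨?_, ?_, ?_⟩
  · intro k; simp [aHC, coeff_X]
    split <;> simp
  · intro k hk; simp [aHC, coeff_X]; omega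
  · intro j hj i
    have : j = 0 := by omega
    subst this
    simp [aHC, coeff_X, coeff_one]
    split <;> simp

lemma natDegree_CX (n : ℕ) : (C (n:ℝ) + X).natDegree ≤ 1 := by
  apply (natDegree_add_le _ _).trans; simp

lemma Sinv_step (n : ℕ) (h1 : Sinv n) (h2 : Sinv (n+1)) : Sinv (n+2) := by
  obtain ⟨d1, z1, p1⟩ := h1
  obtain ⟨d2, z2, p2⟩ := h2
  refine ⟨?_, ?_, ?_⟩
  · -- degree bound
    intro k
    cases k with
    | zero =>
      rw [aHC_coeff_zero, natDegree_neg]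
      calc ((C (n:ℝ) + X) * (aHC n).coeff 0).natDegree
          ≤ (C (n:ℝ) + X).natDegree + ((aHC n).coeff 0).natDegree := natDegree_mul_le
        _ ≤ 1 + (n - 0)/2 := add_le_add (natDegree_CX n) (d1 0)
        _ ≤ (n + 2 - 0)/2 := by omega
    | succ m =>
      rw [aHC_coeff_succ]
      apply (natDegree_sub_le _ _).trans
      apply max_le
      · exact (d2 m).trans (by omega)
      · by_cases hm : n < m + 1
        · rw [z1 (m+1) hm, mul_zero, natDegree_zero]; exact Nat.zero_le _
        · calc ((C (n:ℝ) + X) * (aHC n).coeff (m+1)).natDegree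
              ≤ (C (n:ℝ) + X).natDegree + ((aHC n).coeff (m+1)).natDegree := natDegree_mul_le
            _ ≤ 1 + (n - (m+1))/2 := add_le_add (natDegree_CX n) (d1 (m+1))
            _ ≤ (n + 2 - (m+1))/2 := by omega
  · -- vanishing above degree
    intro k hk
    obtain ⟨m, rfl⟩ : ∃ m, k = m + 1 := ⟨k - 1, by omega⟩
    rw [aHC_coeff_succ, z2 m (by omega), z1 (m+1) (by omega), mul_zero, sub_zero]
  · -- sign of coefficients
    intro j hj i
    cases j with
    | zero =>
      have e : n + 2 - 2*0 = (n+1) + 1 := by omega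
      rw [e, aHC_coeff_succ, z1 (n+1+1) (by omega), mul_zero, sub_zero]
      have := p2 0 (by omega) i
      simpa using this
    | succ l =>
      have hl : 2*l ≤ n := by omega
      have hB : ∀ i, 0 ≤ ((C (n:ℝ) + X) * ((-1:ℝ)^l • (aHC n).coeff (n - 2*l))).coeff i :=
        mul_shift_coeff_nonneg n _ (fun i => by rw [coeff_smul, smul_eq_mul]; exact p1 l hl i)
      have hB' : ∀ i, 0 ≤ (-1:ℝ)^l * (((C (n:ℝ) + X) * (aHC n).coeff (n - 2*l)).coeff i) := by
        intro i
        have := hB i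
        rwa [mul_smul_comm, coeff_smul, smul_eq_mul] at this
      by_cases hz : 2*l = n
      · -- index 0
        have e : n + 2 - 2*(l+1) = 0 := by omega
        rw [e, aHC_coeff_zero]
        have e2 : (aHC n).coeff 0 = (aHC n).coeff (n - 2*l) := by rw [show n - 2*l = 0 by omega]
        rw [e2]
        have : (-1:ℝ)^(l+1) * ((-((C (n:ℝ)+X) * (aHC n).coeff (n - 2*l))).coeff i)
            = (-1:ℝ)^l * (((C (n:ℝ)+X) * (aHC n).coeff (n - 2*l)).coeff i) := by
          rw [coeff_neg]; ring
        rw [this]; exact hB' i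
      · -- index ≥ 1
        have e : n + 2 - 2*(l+1) = (n - 2*l - 1) + 1 := by omega
        rw [e, aHC_coeff_succ, show n - 2*l - 1 + 1 = n - 2*l by omega]
        have hA : 0 ≤ (-1:ℝ)^(l+1) * (((aHC (n+1)).coeff (n - 2*l - 1)).coeff i) := by
          have := p2 (l+1) (by omega) i
          rwa [show n + 1 - 2*(l+1) = n - 2*l - 1 by omega] at this
        have : (-1:ℝ)^(l+1) * (((aHC (n+1)).coeff (n - 2*l - 1)
              - (C (n:ℝ)+X) * (aHC n).coeff (n - 2*l)).coeff i)
            = (-1:ℝ)^(l+1) * (((aHC (n+1)).coeff (n - 2*l - 1)).coeff i)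
              + (-1:ℝ)^l * (((C (n:ℝ)+X) * (aHC n).coeff (n - 2*l)).coeff i) := by
          rw [coeff_sub]; ring
        rw [this]
        exact add_nonneg hA (hB' i)

lemma Sinv_all (n : ℕ) : Sinv n := by
  suffices h : ∀ m, Sinv m ∧ Sinv (m+1) from (h n).1
  intro m
  induction m with
  | zero => exact ⟨Sinv_zero, Sinv_one⟩
  | succ k ih => exact ⟨ih.2, Sinv_step k ih.1 ih.2⟩


/-- The coefficient of `x^k` in `H_n(x;c)` is a polynomial in `c` of degree at most
`⌊(n−k)/2⌋`, and the coefficient of `x^{n−2j}` in `(−1)^j H_n(x;c)` has nonnegative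
leading coefficient as a polynomial in `c`. -/
theorem assocHermite_coeff_in_c (n : ℕ) :
    (∀ k : ℕ, ((aHC n).coeff k).natDegree ≤ (n - k) / 2) ∧
    (∀ j : ℕ, 2 * j ≤ n →
      0 ≤ (((-1 : Polynomial (Polynomial ℝ)) ^ j * aHC n).coeff (n - 2 * j)).leadingCoeff) := by
  obtain ⟨d, z, p⟩ := Sinv_all n
  refine ⟨d, ?_⟩
  intro j hj
  have e1 : ((-1 : Polynomial (Polynomial ℝ)) ^ j * aHC n).coeff (n - 2*j)
      = (-1 : Polynomial ℝ)^j * (aHC n).coeff (n - 2*j) := by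
    rw [show ((-1 : Polynomial (Polynomial ℝ))^j) = C ((-1 : Polynomial ℝ)^j) by simp,
      coeff_C_mul]
  rw [e1, Polynomial.leadingCoeff,
    show ((-1 : Polynomial ℝ)^j) = C ((-1:ℝ)^j) by simp, coeff_C_mul]
  exact p j hj _
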